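/- Let P be a probability distribution on a finite set with |supp(P)| = n, and let 0 < α ≤ β ≤ ∞. Then H_β(P) ≥ H_β(v_n(p)) where p = H_α^{-1}(v_n : H_α(P)); symmetrically, if 0 < β ≤ α ≤ ∞ then H_β(P) ≤ H_β(v_n(p)). -/

import Mathlib

open scoped ENNReal

/-- The distribution `v_n(p)`: one mass `p` and `n-1` masses `(1-p)/(n-1)`. -/
noncomputable def vDist (n : ℕ) (p : ℝ) : Fin n → ℝ :=
  fun i => if (i : ℕ) = 0 then p else (1 - p) / ((n : ℝ) - 1)

/-- The Rényi entropy of order `α ∈ (0, ∞]` of a distribution on `Fin n`: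
`H_α(P) = (1/(1-α)) ln Σ_i P(i)^α` for `α ≠ 1, ∞`, Shannon entropy at `α = 1`,
min-entropy `-ln max_i P(i)` at `α = ∞`. -/
noncomputable def renyiF {n : ℕ} (P : Fin n → ℝ) (α : ℝ≥0∞) : ℝ :=
  if α = ⊤ then - Real.log (⨆ i, P i)
  else if α = 1 then - ∑ i, P i * Real.log (P i)
  else (1 / (1 - α.toReal)) * Real.log (∑ i, P i ^ α.toReal)

open Real Finset Set


variable {ι : Type*} [Fintype ι]

noncomputable def esum (c lam : ι → ℝ) (s : ℝ) : ℝ := ∑ i, c i * Real.exp (lam i * s)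

lemma esum_hasDerivAt (c lam : ι → ℝ) (s : ℝ) :
    HasDerivAt (esum c lam) (esum (fun i => c i * lam i) lam s) s := by
  unfold esum
  apply HasDerivAt.fun_sum
  intro i _
  have h : HasDerivAt (fun y : ℝ => lam i * y) (lam i) s := by
    simpa using (hasDerivAt_id s).const_mul (lam i)
  have h2 := (h.exp).const_mul (c i)
  convert h2 using 1
  case e'_4 => rfl
  ring

lemma esum_shift (c lam : ι → ℝ) (t s : ℝ) :
    esum c (fun i => lam i - t) s = esum c lam s * Real.exp (-(t * s)) := by
  unfold esum
  rw [Finset.sum_mul]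
  refine Finset.sum_congr rfl fun i _ => ?_
  have h : (lam i - t) * s = lam i * s + -(t * s) := by ring
  rw [h, Real.exp_add, mul_assoc]

lemma esum_sign (c lam : ι → ℝ) (t s : ℝ) :
    (0 ≤ esum c lam s ↔ 0 ≤ esum c (fun i => lam i - t) s) ∧
    (esum c lam s ≤ 0 ↔ esum c (fun i => lam i - t) s ≤ 0) := by
  rw [esum_shift]
  have he := Real.exp_pos (-(t * s))
  constructor
  · exact (mul_nonneg_iff_of_pos_right he).symm
  · constructor
    · intro h; nlinarith
    · intro h; nlinarith

lemma esum_zero_shift {c lam : ι → ℝ} {t s : ℝ} (h : esum c lam s = 0) :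
    esum c (fun i => lam i - t) s = 0 := by rw [esum_shift, h, zero_mul]

lemma L1 {c lam : ι → ℝ} {t s₀ : ℝ}
    (hsign : ∀ i, (0 ≤ c i ∧ t ≤ lam i) ∨ (c i ≤ 0 ∧ lam i ≤ t))
    (hz : esum c lam s₀ = 0) :
    (∀ s, s₀ ≤ s → 0 ≤ esum c lam s) ∧ (∀ s, s ≤ s₀ → esum c lam s ≤ 0) := by
  set d : ι → ℝ := fun i => c i * (lam i - t) with hd
  have hd0 : ∀ s, 0 ≤ esum d (fun i => lam i - t) s := by
    intro s
    apply Finset.sum_nonneg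
    intro i _
    have h0 : 0 ≤ d i := by
      rcases hsign i with ⟨h1, h2⟩ | ⟨h1, h2⟩
      · exact mul_nonneg h1 (by linarith)
      · have h3 : lam i - t ≤ 0 := by linarith
        show 0 ≤ c i * (lam i - t)
        nlinarith
    exact mul_nonneg h0 (Real.exp_pos _).le
  have hmono : Monotone (esum c (fun i => lam i - t)) := by
    apply monotone_of_deriv_nonneg
    · exact fun s => (esum_hasDerivAt _ _ s).differentiableAt
    · intro s
      rw [(esum_hasDerivAt c (fun i => lam i - t) s).deriv]
      exact hd0 s
  have hF0 : esum c (fun i => lam i - t) s₀ = 0 := esum_zero_shift hz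
  constructor
  · intro s hs
    rw [(esum_sign c lam t s).1]
    rw [← hF0]
    exact hmono hs
  · intro s hs
    rw [(esum_sign c lam t s).2]
    rw [← hF0]
    exact hmono hs

lemma esum_monoOn {c lam : ι → ℝ} {D : Set ℝ} (hD : Convex ℝ D)
    (h : ∀ s ∈ D, 0 ≤ esum (fun i => c i * lam i) lam s) : MonotoneOn (esum c lam) D := by
  apply monotoneOn_of_deriv_nonneg hD
  · exact fun s _ => (esum_hasDerivAt c lam s).differentiableAt.continuousAt.continuousWithinAt
  · exact fun s hs => (esum_hasDerivAt c lam s).differentiableAt.differentiableWithinAt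
  · intro s hs
    rw [(esum_hasDerivAt c lam s).deriv]
    exact h s (interior_subset hs)

lemma esum_antiOn {c lam : ι → ℝ} {D : Set ℝ} (hD : Convex ℝ D)
    (h : ∀ s ∈ D, esum (fun i => c i * lam i) lam s ≤ 0) : AntitoneOn (esum c lam) D := by
  apply antitoneOn_of_deriv_nonpos hD
  · exact fun s _ => (esum_hasDerivAt c lam s).differentiableAt.continuousAt.continuousWithinAt
  · exact fun s hs => (esum_hasDerivAt c lam s).differentiableAt.differentiableWithinAt
  · intro s hs
    rw [(esum_hasDerivAt c lam s).deriv]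
    exact h s (interior_subset hs)

lemma L2 {c lam : ι → ℝ} {t₁ t₂ s₁ s₂ : ℝ} (ht : t₂ ≤ t₁)
    (hsign : ∀ i, (0 ≤ c i ∧ t₁ ≤ lam i) ∨ (c i ≤ 0 ∧ t₂ ≤ lam i ∧ lam i ≤ t₁) ∨
      (0 ≤ c i ∧ lam i ≤ t₂))
    (h12 : s₁ < s₂) (hz1 : esum c lam s₁ = 0) (hz2 : esum c lam s₂ = 0) :
    (∀ s, s ≤ s₁ → 0 ≤ esum c lam s) ∧ (∀ s, s₁ ≤ s → s ≤ s₂ → esum c lam s ≤ 0) ∧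
      (∀ s, s₂ ≤ s → 0 ≤ esum c lam s) := by
  have hcont : ContinuousOn (esum c (fun i => lam i - t₁)) (Set.Icc s₁ s₂) :=
    fun s _ => (esum_hasDerivAt c _ s).differentiableAt.continuousAt.continuousWithinAt
  have hzz : esum c (fun i => lam i - t₁) s₁ = esum c (fun i => lam i - t₁) s₂ := by
    rw [esum_zero_shift hz1, esum_zero_shift hz2]
  obtain ⟨ξ, hξ, hξ0⟩ := exists_deriv_eq_zero h12 hcont hzz
  have hdz : esum (fun i => c i * (lam i - t₁)) (fun i => lam i - t₁) ξ = 0 := by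
    rw [← (esum_hasDerivAt c (fun i => lam i - t₁) ξ).deriv]; exact hξ0
  have hsign' : ∀ i, (0 ≤ c i * (lam i - t₁) ∧ t₂ - t₁ ≤ lam i - t₁) ∨
      (c i * (lam i - t₁) ≤ 0 ∧ lam i - t₁ ≤ t₂ - t₁) := by
    intro i
    rcases hsign i with ⟨h1, h2⟩ | ⟨h1, h2, h3⟩ | ⟨h1, h2⟩
    · left
      refine ⟨mul_nonneg h1 (by linarith), by linarith⟩
    · left
      refine ⟨by nlinarith, by linarith⟩
    · right
      refine ⟨by nlinarith, by linarith⟩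
  have hL1 := L1 hsign' hdz
  have hanti : AntitoneOn (esum c (fun i => lam i - t₁)) (Set.Iic ξ) :=
    esum_antiOn (convex_Iic ξ) (fun s hs => hL1.2 s hs)
  have hmono : MonotoneOn (esum c (fun i => lam i - t₁)) (Set.Ici ξ) :=
    esum_monoOn (convex_Ici ξ) (fun s hs => hL1.1 s hs)
  have hF1 : esum c (fun i => lam i - t₁) s₁ = 0 := esum_zero_shift hz1
  have hF2 : esum c (fun i => lam i - t₁) s₂ = 0 := esum_zero_shift hz2
  refine ⟨?_, ?_, ?_⟩
  · intro s hs
    rw [(esum_sign c lam t₁ s).1]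
    rw [← hF1]
    exact hanti (le_trans hs hξ.1.le) hξ.1.le hs
  · intro s hsl hsr
    rw [(esum_sign c lam t₁ s).2]
    rcases le_total s ξ with h | h
    · rw [← hF1]
      exact hanti (le_trans hsl h) h hsl
    · rw [← hF2]
      exact hmono h hξ.2.le hsr
  · intro s hs
    rw [(esum_sign c lam t₁ s).1]
    rw [← hF2]
    exact hmono hξ.2.le (le_trans hξ.2.le hs) hs

lemma deriv_sign_transfer {c lam : ι → ℝ} {t₁ s : ℝ}
    (h1 : esum c lam s = 0) (h2 : esum (fun i => c i * lam i) lam s = 0) :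
    esum (fun i => c i * (lam i - t₁)) (fun i => lam i - t₁) s = 0 := by
  have key : ∀ i, c i * (lam i - t₁) = c i * lam i + (-t₁) * c i := by intro i; ring
  have : esum (fun i => c i * (lam i - t₁)) (fun i => lam i - t₁) s =
      esum (fun i => c i * lam i) (fun i => lam i - t₁) s +
      (-t₁) * esum c (fun i => lam i - t₁) s := by
    unfold esum
    rw [Finset.mul_sum, ← Finset.sum_add_distrib]
    refine Finset.sum_congr rfl fun i _ => ?_
    ring
  rw [this, esum_zero_shift h1, esum_zero_shift h2, mul_zero, add_zero]

omit [Fintype ι] in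
lemma L3sign {c lam : ι → ℝ} {t₁ t₂ t₃ : ℝ} (ht1 : t₂ ≤ t₁) (ht2 : t₃ ≤ t₂)
    (hsign : ∀ i, (0 ≤ c i ∧ t₁ ≤ lam i) ∨ (c i ≤ 0 ∧ t₂ ≤ lam i ∧ lam i ≤ t₁) ∨
      (0 ≤ c i ∧ t₃ ≤ lam i ∧ lam i ≤ t₂) ∨ (c i ≤ 0 ∧ lam i ≤ t₃)) :
    ∀ i, (0 ≤ c i * (lam i - t₁) ∧ t₂ - t₁ ≤ lam i - t₁) ∨
      (c i * (lam i - t₁) ≤ 0 ∧ t₃ - t₁ ≤ lam i - t₁ ∧ lam i - t₁ ≤ t₂ - t₁) ∨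
      (0 ≤ c i * (lam i - t₁) ∧ lam i - t₁ ≤ t₃ - t₁) := by
  intro i
  rcases hsign i with ⟨h1, h2⟩ | ⟨h1, h2, h3⟩ | ⟨h1, h2, h3⟩ | ⟨h1, h2⟩
  · exact Or.inl ⟨mul_nonneg h1 (by linarith), by linarith⟩
  · exact Or.inl ⟨by nlinarith, by linarith⟩
  · exact Or.inr (Or.inl ⟨by nlinarith, by linarith, by linarith⟩)
  · exact Or.inr (Or.inr ⟨by nlinarith, by linarith⟩)

lemma L3 {c lam : ι → ℝ} {t₁ t₂ t₃ s₁ s₂ s₃ : ℝ} (ht1 : t₂ ≤ t₁) (ht2 : t₃ ≤ t₂)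
    (hsign : ∀ i, (0 ≤ c i ∧ t₁ ≤ lam i) ∨ (c i ≤ 0 ∧ t₂ ≤ lam i ∧ lam i ≤ t₁) ∨
      (0 ≤ c i ∧ t₃ ≤ lam i ∧ lam i ≤ t₂) ∨ (c i ≤ 0 ∧ lam i ≤ t₃))
    (h12 : s₁ < s₂) (h23 : s₂ < s₃)
    (hz1 : esum c lam s₁ = 0) (hz2 : esum c lam s₂ = 0) (hz3 : esum c lam s₃ = 0) :
    (∀ s, s₁ ≤ s → s ≤ s₂ → 0 ≤ esum c lam s) ∧
      (∀ s, s₂ ≤ s → s ≤ s₃ → esum c lam s ≤ 0) ∧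
      (∀ s, s₃ ≤ s → 0 ≤ esum c lam s) := by
  have hcont : ∀ (a b : ℝ), ContinuousOn (esum c (fun i => lam i - t₁)) (Set.Icc a b) :=
    fun a b s _ => (esum_hasDerivAt c _ s).differentiableAt.continuousAt.continuousWithinAt
  have hF1 : esum c (fun i => lam i - t₁) s₁ = 0 := esum_zero_shift hz1
  have hF2 : esum c (fun i => lam i - t₁) s₂ = 0 := esum_zero_shift hz2
  have hF3 : esum c (fun i => lam i - t₁) s₃ = 0 := esum_zero_shift hz3
  obtain ⟨ξ₁, hξ₁, hξ₁0⟩ := exists_deriv_eq_zero h12 (hcont s₁ s₂) (hF1.trans hF2.symm)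
  obtain ⟨ξ₂, hξ₂, hξ₂0⟩ := exists_deriv_eq_zero h23 (hcont s₂ s₃) (hF2.trans hF3.symm)
  have hdz1 : esum (fun i => c i * (lam i - t₁)) (fun i => lam i - t₁) ξ₁ = 0 := by
    rw [← (esum_hasDerivAt c (fun i => lam i - t₁) ξ₁).deriv]; exact hξ₁0
  have hdz2 : esum (fun i => c i * (lam i - t₁)) (fun i => lam i - t₁) ξ₂ = 0 := by
    rw [← (esum_hasDerivAt c (fun i => lam i - t₁) ξ₂).deriv]; exact hξ₂0
  have hL2 := L2 (by linarith : t₃ - t₁ ≤ t₂ - t₁) (L3sign ht1 ht2 hsign)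
    (lt_trans hξ₁.2 hξ₂.1) hdz1 hdz2
  have hmono1 : MonotoneOn (esum c (fun i => lam i - t₁)) (Set.Iic ξ₁) :=
    esum_monoOn (convex_Iic ξ₁) (fun s hs => hL2.1 s hs)
  have hanti : AntitoneOn (esum c (fun i => lam i - t₁)) (Set.Icc ξ₁ ξ₂) :=
    esum_antiOn (convex_Icc ξ₁ ξ₂) (fun s hs => hL2.2.1 s hs.1 hs.2)
  have hmono2 : MonotoneOn (esum c (fun i => lam i - t₁)) (Set.Ici ξ₂) :=
    esum_monoOn (convex_Ici ξ₂) (fun s hs => hL2.2.2 s hs)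
  refine ⟨?_, ?_, ?_⟩
  · intro s hsl hsr
    rw [(esum_sign c lam t₁ s).1]
    rcases le_total s ξ₁ with h | h
    · rw [← hF1]; exact hmono1 (le_trans hsl h) h hsl
    · rw [← hF2]
      exact hanti ⟨h, by linarith [hξ₂.1]⟩ ⟨hξ₁.2.le, hξ₂.1.le⟩ hsr
  · intro s hsl hsr
    rw [(esum_sign c lam t₁ s).2]
    rcases le_total s ξ₂ with h | h
    · rw [← hF2]; exact hanti ⟨hξ₁.2.le, hξ₂.1.le⟩ ⟨by linarith [hξ₁.2], h⟩ hsl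
    · rw [← hF3]; exact hmono2 h hξ₂.2.le hsr
  · intro s hs
    rw [(esum_sign c lam t₁ s).1]
    rw [← hF3]
    exact hmono2 hξ₂.2.le (hξ₂.2.le.trans hs) hs

lemma L3double {c lam : ι → ℝ} {t₁ t₂ t₃ s₁ s₂ : ℝ} (ht1 : t₂ ≤ t₁) (ht2 : t₃ ≤ t₂)
    (hsign : ∀ i, (0 ≤ c i ∧ t₁ ≤ lam i) ∨ (c i ≤ 0 ∧ t₂ ≤ lam i ∧ lam i ≤ t₁) ∨
      (0 ≤ c i ∧ t₃ ≤ lam i ∧ lam i ≤ t₂) ∨ (c i ≤ 0 ∧ lam i ≤ t₃))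
    (h12 : s₁ < s₂)
    (hz1 : esum c lam s₁ = 0) (hz2 : esum c lam s₂ = 0)
    (hz2' : esum (fun i => c i * lam i) lam s₂ = 0) :
    ∀ s, s₁ ≤ s → 0 ≤ esum c lam s := by
  have hcont : ContinuousOn (esum c (fun i => lam i - t₁)) (Set.Icc s₁ s₂) :=
    fun s _ => (esum_hasDerivAt c _ s).differentiableAt.continuousAt.continuousWithinAt
  have hF1 : esum c (fun i => lam i - t₁) s₁ = 0 := esum_zero_shift hz1
  have hF2 : esum c (fun i => lam i - t₁) s₂ = 0 := esum_zero_shift hz2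
  obtain ⟨ξ, hξ, hξ0⟩ := exists_deriv_eq_zero h12 hcont (hF1.trans hF2.symm)
  have hdz1 : esum (fun i => c i * (lam i - t₁)) (fun i => lam i - t₁) ξ = 0 := by
    rw [← (esum_hasDerivAt c (fun i => lam i - t₁) ξ).deriv]; exact hξ0
  have hdz2 : esum (fun i => c i * (lam i - t₁)) (fun i => lam i - t₁) s₂ = 0 :=
    deriv_sign_transfer hz2 hz2'
  have hL2 := L2 (by linarith : t₃ - t₁ ≤ t₂ - t₁) (L3sign ht1 ht2 hsign) hξ.2 hdz1 hdz2
  have hmono1 : MonotoneOn (esum c (fun i => lam i - t₁)) (Set.Iic ξ) :=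
    esum_monoOn (convex_Iic ξ) (fun s hs => hL2.1 s hs)
  have hanti : AntitoneOn (esum c (fun i => lam i - t₁)) (Set.Icc ξ s₂) :=
    esum_antiOn (convex_Icc ξ s₂) (fun s hs => hL2.2.1 s hs.1 hs.2)
  have hmono2 : MonotoneOn (esum c (fun i => lam i - t₁)) (Set.Ici s₂) :=
    esum_monoOn (convex_Ici s₂) (fun s hs => hL2.2.2 s hs)
  intro s hs
  rw [(esum_sign c lam t₁ s).1]
  rcases le_total s ξ with h | h
  · rw [← hF1]; exact hmono1 (le_trans hs h) h hs
  · rcases le_total s s₂ with h2 | h2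
    · rw [← hF2]; exact hanti ⟨h, h2⟩ ⟨hξ.2.le, le_refl _⟩ h2
    · rw [← hF2]; exact hmono2 (Set.mem_Ici.mpr (le_refl s₂)) h2 h2



lemma vDist_zero (n : ℕ) (p : ℝ) (h : 0 < n) (i : Fin n) (hi : (i : ℕ) = 0) :
    vDist n p i = p := by simp [vDist, hi]

lemma sum_vDist_comp (m : ℕ) (p : ℝ) (f : ℝ → ℝ) :
    ∑ i : Fin (m+1), f (vDist (m+1) p i) =
      f p + m * f ((1 - p)/((m+1 : ℝ) - 1)) := by
  rw [Fin.sum_univ_succ]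
  have h0 : vDist (m+1) p 0 = p := by simp [vDist]
  have hs : ∀ i : Fin m, vDist (m+1) p i.succ = (1 - p)/((m+1 : ℝ) - 1) := by
    intro i
    simp [vDist, Fin.val_succ]
  rw [h0]
  congr 1
  rw [Finset.sum_congr rfl (fun i _ => by rw [hs i])]
  rw [Finset.sum_const, Finset.card_univ, Fintype.card_fin, nsmul_eq_mul]

lemma fin_ciSup_eq {n : ℕ} (f : Fin n → ℝ) (i₀ : Fin n) (h : ∀ j, f j ≤ f i₀) :
    ⨆ j, f j = f i₀ := by
  haveI : Nonempty (Fin n) := ⟨i₀⟩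
  exact le_antisymm (ciSup_le h) (le_ciSup (Set.Finite.bddAbove (Set.finite_range f)) i₀)

lemma exists_max {n : ℕ} (hn : 1 ≤ n) (f : Fin n → ℝ) : ∃ i₀, ∀ j, f j ≤ f i₀ := by
  haveI : Nonempty (Fin n) := ⟨⟨0, hn⟩⟩
  exact Finite.exists_max f

section Jensen

variable {n : ℕ} {P : Fin n → ℝ} {i₀ : Fin n}

lemma erase_card (i₀ : Fin n) : ((Finset.univ : Finset (Fin n)).erase i₀).card = n - 1 := by
  rw [Finset.card_erase_of_mem (Finset.mem_univ _), Finset.card_univ, Fintype.card_fin]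

lemma erase_sum (hsum : ∑ i, P i = 1) (i₀ : Fin n) :
    ∑ i ∈ Finset.univ.erase i₀, P i = 1 - P i₀ := by
  have := Finset.add_sum_erase Finset.univ P (Finset.mem_univ i₀)
  linarith [hsum ▸ this.symm]

-- Jensen for a > 1 : (n-1) * ((1-q)/(n-1))^a ≤ ∑_{i≠i₀} (P i)^a
lemma jensen_gt_one (hn2 : 2 ≤ n) (hP : ∀ i, 0 < P i) (hsum : ∑ i, P i = 1)
    {a : ℝ} (ha : 1 ≤ a) :
    ((n : ℝ) - 1) * ((1 - P i₀)/((n:ℝ) - 1)) ^ a ≤ ∑ i ∈ Finset.univ.erase i₀, P i ^ a := by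
  have hcard : (((Finset.univ : Finset (Fin n)).erase i₀).card : ℝ) = (n : ℝ) - 1 := by
    rw [erase_card]
    have : (1:ℕ) ≤ n := le_trans (by norm_num) hn2
    push_cast [Nat.cast_sub this]
    ring
  have hn1 : (0:ℝ) < (n:ℝ) - 1 := by
    have : (2:ℝ) ≤ (n:ℝ) := by exact_mod_cast hn2
    linarith
  have key := Real.rpow_arith_mean_le_arith_mean_rpow (Finset.univ.erase i₀)
    (fun _ => ((n:ℝ) - 1)⁻¹) P (fun i _ => by positivity)
    (by rw [Finset.sum_const, nsmul_eq_mul, hcard, mul_inv_cancel₀ hn1.ne'])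
    (fun i _ => (hP i).le) ha
  rw [← Finset.mul_sum, ← Finset.mul_sum, erase_sum hsum i₀] at key
  have h1 : (((n:ℝ)-1)⁻¹ * (1 - P i₀)) ^ a = ((1 - P i₀)/((n:ℝ) - 1)) ^ a := by
    rw [inv_mul_eq_div]
  rw [h1] at key
  calc ((n : ℝ) - 1) * ((1 - P i₀)/((n:ℝ) - 1)) ^ a
      ≤ ((n : ℝ) - 1) * (((n:ℝ)-1)⁻¹ * ∑ i ∈ Finset.univ.erase i₀, P i ^ a) := by
        apply mul_le_mul_of_nonneg_left key hn1.le
    _ = ∑ i ∈ Finset.univ.erase i₀, P i ^ a := by field_simp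

-- Jensen for 0 < a < 1 : ∑_{i≠i₀} (P i)^a ≤ (n-1) * ((1-q)/(n-1))^a
lemma jensen_lt_one (hn2 : 2 ≤ n) (hP : ∀ i, 0 < P i) (hsum : ∑ i, P i = 1)
    {a : ℝ} (ha0 : 0 < a) (ha : a < 1) :
    ∑ i ∈ Finset.univ.erase i₀, P i ^ a ≤ ((n : ℝ) - 1) * ((1 - P i₀)/((n:ℝ) - 1)) ^ a := by
  have hcard : (((Finset.univ : Finset (Fin n)).erase i₀).card : ℝ) = (n : ℝ) - 1 := by
    rw [erase_card]
    have : (1:ℕ) ≤ n := le_trans (by norm_num) hn2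
    push_cast [Nat.cast_sub this]
    ring
  have hn1 : (0:ℝ) < (n:ℝ) - 1 := by
    have : (2:ℝ) ≤ (n:ℝ) := by exact_mod_cast hn2
    linarith
  have key := (Real.strictConcaveOn_rpow ha0 ha).concaveOn.le_map_sum
    (t := Finset.univ.erase i₀) (w := fun _ => ((n:ℝ) - 1)⁻¹) (p := P)
    (fun i _ => by positivity)
    (by rw [Finset.sum_const, nsmul_eq_mul, hcard, mul_inv_cancel₀ hn1.ne'])
    (fun i _ => Set.mem_Ici.mpr (hP i).le)
  simp only [smul_eq_mul, ← Finset.mul_sum] at key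
  rw [erase_sum hsum i₀] at key
  have h1 : (((n:ℝ)-1)⁻¹ * (1 - P i₀)) ^ a = ((1 - P i₀)/((n:ℝ) - 1)) ^ a := by
    rw [inv_mul_eq_div]
  rw [h1] at key
  calc ∑ i ∈ Finset.univ.erase i₀, P i ^ a
      = ((n : ℝ) - 1) * (((n:ℝ)-1)⁻¹ * ∑ i ∈ Finset.univ.erase i₀, P i ^ a) := by field_simp
    _ ≤ ((n : ℝ) - 1) * ((1 - P i₀)/((n:ℝ) - 1)) ^ a :=
        mul_le_mul_of_nonneg_left key hn1.le

-- Jensen for Shannon : ∑_{i≠i₀} negMulLog (P i) ≤ (n-1) * negMulLog ((1-q)/(n-1))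
lemma jensen_shannon (hn2 : 2 ≤ n) (hP : ∀ i, 0 < P i) (hsum : ∑ i, P i = 1) :
    ∑ i ∈ Finset.univ.erase i₀, Real.negMulLog (P i) ≤
      ((n : ℝ) - 1) * Real.negMulLog ((1 - P i₀)/((n:ℝ) - 1)) := by
  have hcard : (((Finset.univ : Finset (Fin n)).erase i₀).card : ℝ) = (n : ℝ) - 1 := by
    rw [erase_card]
    have : (1:ℕ) ≤ n := le_trans (by norm_num) hn2
    push_cast [Nat.cast_sub this]
    ring
  have hn1 : (0:ℝ) < (n:ℝ) - 1 := by
    have : (2:ℝ) ≤ (n:ℝ) := by exact_mod_cast hn2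
    linarith
  have key := Real.strictConcaveOn_negMulLog.concaveOn.le_map_sum
    (t := Finset.univ.erase i₀) (w := fun _ => ((n:ℝ) - 1)⁻¹) (p := P)
    (fun i _ => by positivity)
    (by rw [Finset.sum_const, nsmul_eq_mul, hcard, mul_inv_cancel₀ hn1.ne'])
    (fun i _ => Set.mem_Ici.mpr (hP i).le)
  simp only [smul_eq_mul, ← Finset.mul_sum] at key
  rw [erase_sum hsum i₀] at key
  rw [show ((n:ℝ)-1)⁻¹ * (1 - P i₀) = (1 - P i₀)/((n:ℝ)-1) from inv_mul_eq_div _ _] at key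
  rw [show ((n:ℝ)-1)⁻¹ * ∑ i ∈ Finset.univ.erase i₀, Real.negMulLog (P i) = (∑ i ∈ Finset.univ.erase i₀, Real.negMulLog (P i))/((n:ℝ)-1) from inv_mul_eq_div _ _] at key
  calc ∑ i ∈ Finset.univ.erase i₀, Real.negMulLog (P i)
      = ((n : ℝ) - 1) * ((∑ i ∈ Finset.univ.erase i₀, Real.negMulLog (P i))/((n:ℝ)-1)) := by
        field_simp
    _ ≤ ((n : ℝ) - 1) * Real.negMulLog ((1 - P i₀)/((n:ℝ) - 1)) :=
        mul_le_mul_of_nonneg_left key hn1.le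

end Jensen

section Mono

noncomputable def fA (n : ℕ) (a x : ℝ) : ℝ := x ^ a + ((n:ℝ)-1) * ((1 - x)/((n:ℝ)-1)) ^ a

noncomputable def fS (n : ℕ) (x : ℝ) : ℝ :=
  Real.negMulLog x + ((n:ℝ)-1) * Real.negMulLog ((1 - x)/((n:ℝ)-1))

variable {n : ℕ}

lemma fA_hasDerivAt (hn2 : 2 ≤ n) {a x : ℝ} (hx0 : 0 < x) (hx1 : x < 1) :
    HasDerivAt (fA n a) (a * (x ^ (a-1) - ((1 - x)/((n:ℝ)-1)) ^ (a-1))) x := by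
  have hn1 : (0:ℝ) < (n:ℝ) - 1 := by
    have : (2:ℝ) ≤ (n:ℝ) := by exact_mod_cast hn2
    linarith
  have hu : 0 < (1 - x)/((n:ℝ)-1) := div_pos (by linarith) hn1
  have h1 : HasDerivAt (fun x : ℝ => x ^ a) (a * x ^ (a-1)) x :=
    Real.hasDerivAt_rpow_const (Or.inl hx0.ne')
  have h2 : HasDerivAt (fun x : ℝ => (1 - x)/((n:ℝ)-1)) (-(((n:ℝ)-1)⁻¹)) x := by
    have : HasDerivAt (fun x : ℝ => 1 - x) (-1) x := by
      simpa using (hasDerivAt_id x).const_sub 1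
    simpa [div_eq_mul_inv, neg_mul] using this.mul_const ((((n:ℝ)-1))⁻¹)
  have h3 : HasDerivAt (fun y : ℝ => ((n:ℝ)-1) * ((1 - y)/((n:ℝ)-1)) ^ a)
      (((n:ℝ)-1) * (-(((n:ℝ)-1)⁻¹) * a * ((1 - x)/((n:ℝ)-1)) ^ (a-1))) x :=
    HasDerivAt.const_mul _ (h2.rpow_const (Or.inl hu.ne'))
  have h4 := h1.add h3
  have hfa : fA n a = fun y : ℝ => y ^ a + ((n:ℝ)-1) * ((1 - y)/((n:ℝ)-1)) ^ a := rfl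
  rw [hfa]
  convert h4 using 1
  case e'_4 => rfl
  case e'_5 => rfl
  case e'_8 => rfl
  field_simp
  ring

lemma fA_strictMonoOn (hn2 : 2 ≤ n) {a : ℝ} (ha : 1 < a) :
    StrictMonoOn (fA n a) (Set.Ico (1/(n:ℝ)) 1) := by
  have hn0 : (0:ℝ) < (n:ℝ) := by positivity
  have hn1 : (0:ℝ) < (n:ℝ) - 1 := by
    have : (2:ℝ) ≤ (n:ℝ) := by exact_mod_cast hn2
    linarith
  have hmem : ∀ x ∈ Set.Ico (1/(n:ℝ)) 1, 0 < x ∧ x < 1 := by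
    intro x hx
    exact ⟨lt_of_lt_of_le (by positivity) hx.1, hx.2⟩
  apply strictMonoOn_of_deriv_pos (convex_Ico _ _)
  · intro x hx
    obtain ⟨h0, h1⟩ := hmem x hx
    exact (fA_hasDerivAt hn2 h0 h1).differentiableAt.continuousAt.continuousWithinAt
  · intro x hx
    rw [interior_Ico] at hx
    have h0 : 0 < x := lt_trans (by positivity) hx.1
    have h1 : x < 1 := hx.2
    rw [(fA_hasDerivAt hn2 h0 h1).deriv]
    have hu0 : 0 < (1 - x)/((n:ℝ)-1) := div_pos (by linarith [hx.2]) hn1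
    have hux : (1 - x)/((n:ℝ)-1) < x := by
      rw [div_lt_iff₀ hn1]
      have : 1 / (n:ℝ) < x := hx.1
      rw [div_lt_iff₀ hn0] at this
      nlinarith
    have : ((1 - x)/((n:ℝ)-1)) ^ (a-1) < x ^ (a-1) :=
      Real.rpow_lt_rpow hu0.le hux (by linarith)
    have ha0 : 0 < a := by linarith
    nlinarith

lemma fA_strictAntiOn (hn2 : 2 ≤ n) {a : ℝ} (ha0 : 0 < a) (ha : a < 1) :
    StrictAntiOn (fA n a) (Set.Ico (1/(n:ℝ)) 1) := by
  have hn0 : (0:ℝ) < (n:ℝ) := by positivity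
  have hn1 : (0:ℝ) < (n:ℝ) - 1 := by
    have : (2:ℝ) ≤ (n:ℝ) := by exact_mod_cast hn2
    linarith
  apply strictAntiOn_of_deriv_neg (convex_Ico _ _)
  · intro x hx
    have h0 : 0 < x := lt_of_lt_of_le (by positivity) hx.1
    exact (fA_hasDerivAt hn2 h0 hx.2).differentiableAt.continuousAt.continuousWithinAt
  · intro x hx
    rw [interior_Ico] at hx
    have h0 : 0 < x := lt_trans (by positivity) hx.1
    have h1 : x < 1 := hx.2
    rw [(fA_hasDerivAt hn2 h0 h1).deriv]
    have hu0 : 0 < (1 - x)/((n:ℝ)-1) := div_pos (by linarith [hx.2]) hn1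
    have hux : (1 - x)/((n:ℝ)-1) < x := by
      rw [div_lt_iff₀ hn1]
      have : 1 / (n:ℝ) < x := hx.1
      rw [div_lt_iff₀ hn0] at this
      nlinarith
    have : x ^ (a-1) < ((1 - x)/((n:ℝ)-1)) ^ (a-1) :=
      Real.rpow_lt_rpow_of_neg hu0 hux (by linarith)
    nlinarith

lemma fS_hasDerivAt (hn2 : 2 ≤ n) {x : ℝ} (hx0 : 0 < x) (hx1 : x < 1) :
    HasDerivAt (fS n) (Real.log ((1 - x)/((n:ℝ)-1)) - Real.log x) x := by
  have hn1 : (0:ℝ) < (n:ℝ) - 1 := by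
    have : (2:ℝ) ≤ (n:ℝ) := by exact_mod_cast hn2
    linarith
  have hu : 0 < (1 - x)/((n:ℝ)-1) := div_pos (by linarith) hn1
  have h1 : HasDerivAt Real.negMulLog (-Real.log x - 1) x :=
    Real.hasDerivAt_negMulLog hx0.ne'
  have h2 : HasDerivAt (fun x : ℝ => (1 - x)/((n:ℝ)-1)) (-(((n:ℝ)-1)⁻¹)) x := by
    have : HasDerivAt (fun x : ℝ => 1 - x) (-1) x := by
      simpa using (hasDerivAt_id x).const_sub 1
    simpa [div_eq_mul_inv, neg_mul] using this.mul_const ((((n:ℝ)-1))⁻¹)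
  have h3 := ((Real.hasDerivAt_negMulLog hu.ne').comp x h2).const_mul ((n:ℝ)-1)
  have h4 := h1.add h3
  have hfs : fS n = fun y : ℝ =>
      Real.negMulLog y + ((n:ℝ)-1) * (Real.negMulLog ∘ fun x : ℝ => (1 - x)/((n:ℝ)-1)) y := rfl
  rw [hfs]
  convert h4 using 1
  case e'_4 => rfl
  case e'_5 => rfl
  case e'_8 => rfl
  field_simp
  ring

lemma fS_strictAntiOn (hn2 : 2 ≤ n) :
    StrictAntiOn (fS n) (Set.Ico (1/(n:ℝ)) 1) := by
  have hn0 : (0:ℝ) < (n:ℝ) := by positivity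
  have hn1 : (0:ℝ) < (n:ℝ) - 1 := by
    have : (2:ℝ) ≤ (n:ℝ) := by exact_mod_cast hn2
    linarith
  apply strictAntiOn_of_deriv_neg (convex_Ico _ _)
  · intro x hx
    have h0 : 0 < x := lt_of_lt_of_le (by positivity) hx.1
    exact (fS_hasDerivAt hn2 h0 hx.2).differentiableAt.continuousAt.continuousWithinAt
  · intro x hx
    rw [interior_Ico] at hx
    have h0 : 0 < x := lt_trans (by positivity) hx.1
    have h1 : x < 1 := hx.2
    rw [(fS_hasDerivAt hn2 h0 h1).deriv]
    have hu0 : 0 < (1 - x)/((n:ℝ)-1) := div_pos (by linarith [hx.2]) hn1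
    have hux : (1 - x)/((n:ℝ)-1) < x := by
      rw [div_lt_iff₀ hn1]
      have : 1 / (n:ℝ) < x := hx.1
      rw [div_lt_iff₀ hn0] at this
      nlinarith
    have := Real.log_lt_log hu0 hux
    linarith

end Mono

section DerivSign

lemma deriv_right_nonneg {g : ℝ → ℝ} {d s₀ T : ℝ} (hT : s₀ < T) (hd : HasDerivAt g d s₀)
    (h0 : g s₀ = 0) (h : ∀ s, s₀ < s → s ≤ T → 0 ≤ g s) : 0 ≤ d := by
  have h1 : HasDerivWithinAt g d (Set.Ioi s₀) s₀ := hd.hasDerivWithinAt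
  rw [hasDerivWithinAt_iff_tendsto_slope] at h1
  have hset : Set.Ioi s₀ \ {s₀} = Set.Ioi s₀ :=
    Set.diff_singleton_eq_self (by simp)
  rw [hset] at h1
  refine ge_of_tendsto h1 ?_
  filter_upwards [Ioo_mem_nhdsGT_of_mem (Set.mem_Ico.mpr ⟨le_refl s₀, hT⟩)] with s hs
  rw [slope_def_field]
  have := h s hs.1 hs.2.le
  have hpos : 0 < s - s₀ := by simp [hs.1, sub_pos]
  rw [h0, sub_zero]
  exact div_nonneg this hpos.le

lemma deriv_right_nonpos {g : ℝ → ℝ} {d s₀ T : ℝ} (hT : s₀ < T) (hd : HasDerivAt g d s₀)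
    (h0 : g s₀ = 0) (h : ∀ s, s₀ < s → s ≤ T → g s ≤ 0) : d ≤ 0 := by
  have hneg : HasDerivAt (fun s => -(g s)) (-d) s₀ := hd.neg
  have := deriv_right_nonneg hT hneg (by simp [h0]) (fun s h1 h2 => by simp [h s h1 h2])
  linarith

end DerivSign

section Bridge

variable {n : ℕ} (Q P : Fin n → ℝ)

noncomputable def cpm : Fin n ⊕ Fin n → ℝ := Sum.elim (fun _ => (1:ℝ)) (fun _ => (-1:ℝ))

noncomputable def lampm (Q P : Fin n → ℝ) : Fin n ⊕ Fin n → ℝ :=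
  Sum.elim (fun i => Real.log (Q i)) (fun i => Real.log (P i))

lemma esum_cpm (hQ : ∀ i, 0 < Q i) (hP : ∀ i, 0 < P i) (s : ℝ) :
    esum (cpm (n := n)) (lampm Q P) s = (∑ i, Q i ^ s) - ∑ i, P i ^ s := by
  unfold esum cpm lampm
  rw [Fintype.sum_sum_type]
  simp only [Sum.elim_inl, Sum.elim_inr, one_mul, neg_one_mul]
  rw [Finset.sum_neg_distrib]
  congr 1
  · exact Finset.sum_congr rfl fun i _ => (Real.rpow_def_of_pos (hQ i) s).symm
  · congr 1
    exact Finset.sum_congr rfl fun i _ => (Real.rpow_def_of_pos (hP i) s).symm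

lemma esum_cpm_deriv (hQ : ∀ i, 0 < Q i) (hP : ∀ i, 0 < P i) :
    esum (fun i => cpm (n := n) i * lampm Q P i) (lampm Q P) 1 =
      (∑ i, Q i * Real.log (Q i)) - ∑ i, P i * Real.log (P i) := by
  unfold esum cpm lampm
  rw [Fintype.sum_sum_type, sub_eq_add_neg, ← Finset.sum_neg_distrib]
  congr 1
  · refine Finset.sum_congr rfl fun i _ => ?_
    simp only [Sum.elim_inl, one_mul, mul_one]
    rw [Real.exp_log (hQ i)]
    ring
  · refine Finset.sum_congr rfl fun i _ => ?_
    simp only [Sum.elim_inr, neg_one_mul, mul_one]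
    rw [Real.exp_log (hP i)]
    ring

lemma G_hasDerivAt (hQ : ∀ i, 0 < Q i) (hP : ∀ i, 0 < P i) :
    HasDerivAt (fun s => (∑ i, Q i ^ s) - ∑ i, P i ^ s)
      ((∑ i, Q i * Real.log (Q i)) - ∑ i, P i * Real.log (P i)) (1:ℝ) := by
  have h2 := esum_hasDerivAt (cpm (n := n)) (lampm Q P) (1:ℝ)
  rw [esum_cpm_deriv Q P hQ hP] at h2
  exact h2.congr_of_eventuallyEq (Filter.Eventually.of_forall fun s => (esum_cpm Q P hQ hP s).symm)

end Bridge

section MainCases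

variable {n : ℕ} {v P : Fin n → ℝ} {p r : ℝ}

lemma sign_hyp3 (hr0 : 0 < r) (hrp : r ≤ p) (hv : ∀ i, v i = p ∨ v i = r)
    (hP : ∀ i, 0 < P i) (hPp : ∀ i, P i ≤ p) :
    ∀ i : Fin n ⊕ Fin n,
      (0 ≤ cpm (n := n) i ∧ Real.log p ≤ lampm v P i) ∨
      (cpm (n := n) i ≤ 0 ∧ Real.log r ≤ lampm v P i ∧ lampm v P i ≤ Real.log p) ∨
      (0 ≤ cpm (n := n) i ∧ Real.log r ≤ lampm v P i ∧ lampm v P i ≤ Real.log r) ∨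
      (cpm (n := n) i ≤ 0 ∧ lampm v P i ≤ Real.log r) := by
  intro i
  rcases i with j | j
  · rcases hv j with h | h
    · exact Or.inl ⟨by norm_num [cpm], by simp [lampm, h]⟩
    · exact Or.inr (Or.inr (Or.inl ⟨by norm_num [cpm], by simp [lampm, h]⟩))
  · rcases le_total (P j) r with h | h
    · refine Or.inr (Or.inr (Or.inr ⟨by norm_num [cpm], ?_⟩))
      simp only [lampm, Sum.elim_inr]
      exact Real.log_le_log (hP j) h
    · refine Or.inr (Or.inl ⟨by norm_num [cpm], ?_, ?_⟩)
      · simp only [lampm, Sum.elim_inr]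
        exact Real.log_le_log hr0 h
      · simp only [lampm, Sum.elim_inr]
        exact Real.log_le_log (hP j) (hPp j)

lemma G_zero_zero (hn : 1 ≤ n) : (∑ i : Fin n, v i ^ (0:ℝ)) - ∑ i : Fin n, P i ^ (0:ℝ) = 0 := by
  simp [Real.rpow_zero]

lemma G_one_zero (hsv : ∑ i, v i = 1) (hsP : ∑ i, P i = 1) :
    (∑ i : Fin n, v i ^ (1:ℝ)) - ∑ i : Fin n, P i ^ (1:ℝ) = 0 := by
  simp only [Real.rpow_one]
  rw [hsv, hsP, sub_self]

/-- Case C : finite order `a ≠ 1`. -/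
lemma caseC (hn : 1 ≤ n) (hr0 : 0 < r) (hrp : r ≤ p)
    (hv : ∀ i, v i = p ∨ v i = r) (hvpos : ∀ i, 0 < v i)
    (hP : ∀ i, 0 < P i) (hPp : ∀ i, P i ≤ p)
    (hsv : ∑ i, v i = 1) (hsP : ∑ i, P i = 1)
    {a : ℝ} (ha0 : 0 < a) (ha1 : a ≠ 1)
    (haz : ∑ i, v i ^ a = ∑ i, P i ^ a) :
    (∀ b, 0 ≤ b → b ≤ min a 1 → ∑ i, P i ^ b ≤ ∑ i, v i ^ b) ∧
    (∀ b, min a 1 ≤ b → b ≤ max a 1 → ∑ i, v i ^ b ≤ ∑ i, P i ^ b) ∧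
    (∀ b, max a 1 ≤ b → ∑ i, P i ^ b ≤ ∑ i, v i ^ b) ∧
    (a < 1 → ∑ i, P i * Real.log (P i) ≤ ∑ i, v i * Real.log (v i)) ∧
    (1 < a → ∑ i, v i * Real.log (v i) ≤ ∑ i, P i * Real.log (P i)) := by
  have hbr := esum_cpm v P hvpos hP
  have hz1 : esum (cpm (n := n)) (lampm v P) 0 = 0 := by rw [hbr]; exact G_zero_zero hn
  have hz2 : esum (cpm (n := n)) (lampm v P) (min a 1) = 0 ∧
      esum (cpm (n := n)) (lampm v P) (max a 1) = 0 := by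
    rcases le_total a 1 with h | h
    · rw [min_eq_left h, max_eq_right h]
      constructor
      · rw [hbr, haz, sub_self]
      · rw [hbr]; exact G_one_zero hsv hsP
    · rw [min_eq_right h, max_eq_left h]
      constructor
      · rw [hbr]; exact G_one_zero hsv hsP
      · rw [hbr, haz, sub_self]
  have hmM : min a 1 < max a 1 := by
    rcases lt_or_gt_of_ne ha1 with h | h
    · rw [min_eq_left h.le, max_eq_right h.le]; exact h
    · rw [min_eq_right h.le, max_eq_left h.le]; exact h
  have h0m : (0:ℝ) < min a 1 := lt_min ha0 one_pos
  have hL3 := L3 (Real.log_le_log hr0 hrp) (le_refl (Real.log r))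
    (sign_hyp3 hr0 hrp hv hP hPp) h0m hmM hz1 hz2.1 hz2.2
  have hDer := G_hasDerivAt v P hvpos hP
  refine ⟨?_, ?_, ?_, ?_, ?_⟩
  · intro b hb0 hbm
    have := hL3.1 b hb0 hbm
    rw [hbr] at this
    linarith
  · intro b hbm hbM
    have := hL3.2.1 b hbm hbM
    rw [hbr] at this
    linarith
  · intro b hbM
    have := hL3.2.2 b hbM
    rw [hbr] at this
    linarith
  · intro ha
    have hM1 : max a 1 = 1 := max_eq_right ha.le
    have hsgn : ∀ s, (1:ℝ) < s → s ≤ 2 → 0 ≤ (∑ i, v i ^ s) - ∑ i, P i ^ s := by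
      intro s h1 h2
      have := hL3.2.2 s (by rw [hM1]; exact h1.le)
      rw [hbr] at this
      linarith
    have := deriv_right_nonneg (by norm_num : (1:ℝ) < 2) hDer
      (G_one_zero hsv hsP) hsgn
    linarith
  · intro ha
    have hm1 : min a 1 = 1 := min_eq_right ha.le
    have hM : max a 1 = a := max_eq_left ha.le
    have hsgn : ∀ s, (1:ℝ) < s → s ≤ a → (∑ i, v i ^ s) - ∑ i, P i ^ s ≤ 0 := by
      intro s h1 h2
      have := hL3.2.1 s (by rw [hm1]; exact h1.le) (by rw [hM]; exact h2)
      rw [hbr] at this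
      linarith
    have := deriv_right_nonpos ha hDer (G_one_zero hsv hsP) hsgn
    linarith

/-- Case B : Shannon order. -/
lemma caseB (hn : 1 ≤ n) (hr0 : 0 < r) (hrp : r ≤ p)
    (hv : ∀ i, v i = p ∨ v i = r) (hvpos : ∀ i, 0 < v i)
    (hP : ∀ i, 0 < P i) (hPp : ∀ i, P i ≤ p)
    (hsv : ∑ i, v i = 1) (hsP : ∑ i, P i = 1)
    (hsz : ∑ i, v i * Real.log (v i) = ∑ i, P i * Real.log (P i)) :
    ∀ b : ℝ, 0 ≤ b → ∑ i, P i ^ b ≤ ∑ i, v i ^ b := by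
  have hbr := esum_cpm v P hvpos hP
  have hz1 : esum (cpm (n := n)) (lampm v P) 0 = 0 := by rw [hbr]; exact G_zero_zero hn
  have hz2 : esum (cpm (n := n)) (lampm v P) 1 = 0 := by rw [hbr]; exact G_one_zero hsv hsP
  have hz2' : esum (fun i => cpm (n := n) i * lampm v P i) (lampm v P) 1 = 0 := by
    rw [esum_cpm_deriv v P hvpos hP, hsz, sub_self]
  have hL := L3double (Real.log_le_log hr0 hrp) (le_refl (Real.log r))
    (sign_hyp3 hr0 hrp hv hP hPp) one_pos hz1 hz2 hz2'
  intro b hb0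
  have := hL b hb0
  rw [hbr] at this
  linarith

/-- Case A : order ∞.  `i₀` is a maximising index of `P` with `P i₀ = p`,
`j₀` the unique index where `v` equals `p`. -/
lemma caseA (hn : 1 ≤ n) (hr0 : 0 < r) (hrp : r ≤ p)
    (hvpos : ∀ i, 0 < v i)
    (hP : ∀ i, 0 < P i) (hPp : ∀ i, P i ≤ p)
    (hsv : ∑ i, v i = 1) (hsP : ∑ i, P i = 1)
    {i₀ j₀ : Fin n} (hpq : P i₀ = p) (hvj : v j₀ = p)
    (hv : ∀ j, j ≠ j₀ → v j = r) :
    (∀ b : ℝ, 0 ≤ b → b ≤ 1 → ∑ i, P i ^ b ≤ ∑ i, v i ^ b) ∧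
    (∀ b : ℝ, 1 ≤ b → ∑ i, v i ^ b ≤ ∑ i, P i ^ b) ∧
    (∑ i, v i * Real.log (v i) ≤ ∑ i, P i * Real.log (P i)) := by
  classical
  set c' : Fin n ⊕ Fin n → ℝ :=
    Sum.elim (fun j => if j = j₀ then 0 else -1) (fun j => if j = i₀ then 0 else 1) with hc'
  have hbr0 := esum_cpm v P hvpos hP
  -- bridge for modified coefficients
  have hbr : ∀ s : ℝ, esum c' (lampm v P) s = -((∑ i, v i ^ s) - ∑ i, P i ^ s) := by
    intro s
    unfold esum lampm
    rw [Fintype.sum_sum_type]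
    simp only [Sum.elim_inl, Sum.elim_inr]
    have e1 : ∀ j : Fin n, c' (Sum.inl j) * Real.exp (Real.log (v j) * s) =
        -(v j ^ s) + (if j = j₀ then v j ^ s else 0) := by
      intro j
      simp only [hc', Sum.elim_inl]
      rw [Real.rpow_def_of_pos (hvpos j)]
      by_cases h : j = j₀ <;> simp [h]
    have e2 : ∀ j : Fin n, c' (Sum.inr j) * Real.exp (Real.log (P j) * s) =
        P j ^ s - (if j = i₀ then P j ^ s else 0) := by
      intro j
      simp only [hc', Sum.elim_inr]
      rw [Real.rpow_def_of_pos (hP j)]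
      by_cases h : j = i₀ <;> simp [h]
    rw [Finset.sum_congr rfl (fun j _ => e1 j), Finset.sum_congr rfl (fun j _ => e2 j)]
    rw [Finset.sum_add_distrib, Finset.sum_sub_distrib]
    rw [Finset.sum_ite_eq' Finset.univ j₀ (fun j => v j ^ s),
      Finset.sum_ite_eq' Finset.univ i₀ (fun j => P j ^ s)]
    simp only [Finset.mem_univ, if_true]
    rw [Finset.sum_neg_distrib, hvj, hpq]
    ring
  have hz1 : esum c' (lampm v P) 0 = 0 := by rw [hbr, G_zero_zero hn, neg_zero]
  have hz2 : esum c' (lampm v P) 1 = 0 := by rw [hbr, G_one_zero hsv hsP, neg_zero]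
  have hsign : ∀ i : Fin n ⊕ Fin n,
      (0 ≤ c' i ∧ Real.log r ≤ lampm v P i) ∨
      (c' i ≤ 0 ∧ Real.log r ≤ lampm v P i ∧ lampm v P i ≤ Real.log r) ∨
      (0 ≤ c' i ∧ lampm v P i ≤ Real.log r) := by
    intro i
    rcases i with j | j
    · by_cases h : j = j₀
      · rcases le_total (Real.log r) (lampm v P (Sum.inl j)) with hh | hh
        · exact Or.inl ⟨by simp [hc', h], hh⟩
        · exact Or.inr (Or.inr ⟨by simp [hc', h], hh⟩)
      · refine Or.inr (Or.inl ⟨by simp [hc', h], ?_, ?_⟩) <;>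
          simp [lampm, hv j h, le_refl]
    · by_cases h : j = i₀
      · rcases le_total (Real.log r) (lampm v P (Sum.inr j)) with hh | hh
        · exact Or.inl ⟨by simp [hc', h], hh⟩
        · exact Or.inr (Or.inr ⟨by simp [hc', h], hh⟩)
      · rcases le_total (Real.log r) (lampm v P (Sum.inr j)) with hh | hh
        · exact Or.inl ⟨by simp [hc', h], hh⟩
        · exact Or.inr (Or.inr ⟨by simp [hc', h], hh⟩)
  have hL2 := L2 (le_refl (Real.log r)) hsign one_pos hz1 hz2
  have hDer := G_hasDerivAt v P hvpos hP
  refine ⟨?_, ?_, ?_⟩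
  · intro b hb0 hb1
    have := hL2.2.1 b hb0 hb1
    rw [hbr] at this
    linarith
  · intro b hb1
    have := hL2.2.2 b hb1
    rw [hbr] at this
    linarith
  · have hsgn : ∀ s : ℝ, 1 < s → s ≤ 2 → (∑ i, v i ^ s) - ∑ i, P i ^ s ≤ 0 := by
      intro s h1 h2
      have := hL2.2.2 s h1.le
      rw [hbr] at this
      linarith
    have := deriv_right_nonpos (by norm_num : (1:ℝ) < 2) hDer (G_one_zero hsv hsP) hsgn
    linarith

end MainCases

section VDistFacts

variable {n : ℕ} {p : ℝ}

lemma sum_vDist_comp' (hn : 1 ≤ n) (p : ℝ) (f : ℝ → ℝ) :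
    ∑ i : Fin n, f (vDist n p i) = f p + ((n:ℝ)-1) * f ((1 - p)/((n:ℝ)-1)) := by
  obtain ⟨m, rfl⟩ : ∃ m, n = m + 1 := ⟨n - 1, by omega⟩
  have := sum_vDist_comp m p f
  push_cast at this ⊢
  simp only [add_sub_cancel_right] at this ⊢
  exact this

lemma sum_vDist_self (hn2 : 2 ≤ n) (p : ℝ) : ∑ i : Fin n, vDist n p i = 1 := by
  have h := sum_vDist_comp' (by omega : 1 ≤ n) p id
  have hn1 : (0:ℝ) < (n:ℝ) - 1 := by
    have : (2:ℝ) ≤ (n:ℝ) := by exact_mod_cast hn2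
    linarith
  simp only [id] at h
  rw [h]
  field_simp
  ring

lemma vDist_mem (n : ℕ) (p : ℝ) (i : Fin n) :
    vDist n p i = p ∨ vDist n p i = (1 - p)/((n:ℝ)-1) := by
  unfold vDist
  split
  · exact Or.inl rfl
  · exact Or.inr rfl

lemma vDist_pos (hp0 : 0 < p) (hr0 : 0 < (1 - p)/((n:ℝ)-1)) :
    ∀ i : Fin n, 0 < vDist n p i := by
  intro i
  rcases vDist_mem n p i with h | h <;> rw [h]
  · exact hp0
  · exact hr0

lemma vDist_sup (hn : 1 ≤ n) (hrp : (1 - p)/((n:ℝ)-1) ≤ p) :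
    ⨆ i, vDist n p i = p := by
  haveI : NeZero n := ⟨by omega⟩
  have h0 : vDist n p 0 = p := by
    simp [vDist]
  refine (fin_ciSup_eq (vDist n p) 0 ?_).trans h0
  intro j
  rw [h0]
  rcases vDist_mem n p j with h | h <;> rw [h]
  exact hrp

end VDistFacts


lemma renyiF_top {n : ℕ} (P : Fin n → ℝ) : renyiF P ⊤ = - Real.log (⨆ i, P i) := by
  simp [renyiF]

lemma renyiF_one {n : ℕ} (P : Fin n → ℝ) : renyiF P 1 = - ∑ i, P i * Real.log (P i) := by
  simp [renyiF]

lemma renyiF_ne {n : ℕ} (P : Fin n → ℝ) {α : ℝ≥0∞} (h1 : α ≠ ⊤) (h2 : α ≠ 1) :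
    renyiF P α = (1 / (1 - α.toReal)) * Real.log (∑ i, P i ^ α.toReal) := by
  simp [renyiF, h1, h2]

lemma sum_rpow_pos {n : ℕ} (hn : 1 ≤ n) {Q : Fin n → ℝ} (hQ : ∀ i, 0 < Q i) (b : ℝ) :
    0 < ∑ i, Q i ^ b := by
  haveI : Nonempty (Fin n) := ⟨⟨0, hn⟩⟩
  exact Finset.sum_pos (fun i _ => Real.rpow_pos_of_pos (hQ i) b) Finset.univ_nonempty

lemma helperNeg {x y c : ℝ} (hy : 0 < y) (h : y ≤ x) (hc : c ≤ 0) :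
    c * Real.log x ≤ c * Real.log y :=
  mul_le_mul_of_nonpos_left (Real.log_le_log hy h) hc

lemma helperPos {x y c : ℝ} (hy : 0 < y) (h : y ≤ x) (hc : 0 ≤ c) :
    c * Real.log y ≤ c * Real.log x :=
  mul_le_mul_of_nonneg_left (Real.log_le_log hy h) hc

lemma P_lt_one {n : ℕ} (hn2 : 2 ≤ n) {P : Fin n → ℝ} (hP : ∀ i, 0 < P i)
    (hsum : ∑ i, P i = 1) : ∀ i, P i < 1 := by
  intro i
  have hcard : 0 < ((Finset.univ : Finset (Fin n)).erase i).card := by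
    rw [erase_card]
    omega
  obtain ⟨j, hj⟩ := Finset.card_pos.mp hcard
  have hpos : 0 < ∑ k ∈ Finset.univ.erase i, P k :=
    Finset.sum_pos (fun k _ => hP k) ⟨j, hj⟩
  have := Finset.add_sum_erase Finset.univ P (Finset.mem_univ i)
  rw [hsum] at this
  linarith

lemma renyiF_vDist_one {n : ℕ} (hn2 : 2 ≤ n) {α : ℝ≥0∞} (hα : 0 < α) :
    renyiF (vDist n (1:ℝ)) α = 0 := by
  have hn1 : (0:ℝ) < (n:ℝ) - 1 := by
    have : (2:ℝ) ≤ (n:ℝ) := by exact_mod_cast hn2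
    linarith
  have hr : (1 - (1:ℝ))/((n:ℝ)-1) = 0 := by
    rw [sub_self, zero_div]
  by_cases htop : α = ⊤
  · subst htop
    rw [renyiF_top, vDist_sup (by omega) (by rw [hr]; norm_num)]
    simp
  · by_cases h1 : α = 1
    · subst h1
      rw [renyiF_one]
      have := sum_vDist_comp' (by omega : 1 ≤ n) (1:ℝ) (fun x => x * Real.log x)
      rw [this, hr]
      simp
    · rw [renyiF_ne _ htop h1]
      have ha0 : 0 < α.toReal := ENNReal.toReal_pos hα.ne' htop
      have := sum_vDist_comp' (by omega : 1 ≤ n) (1:ℝ) (fun x => x ^ α.toReal)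
      rw [this, hr]
      rw [Real.one_rpow, Real.zero_rpow ha0.ne']
      simp

lemma renyiF_pos {n : ℕ} (hn2 : 2 ≤ n) {P : Fin n → ℝ} (hP : ∀ i, 0 < P i)
    (hsum : ∑ i, P i = 1) {α : ℝ≥0∞} (hα : 0 < α) : 0 < renyiF P α := by
  have hlt := P_lt_one hn2 hP hsum
  haveI : Nonempty (Fin n) := ⟨⟨0, by omega⟩⟩
  by_cases htop : α = ⊤
  · subst htop
    rw [renyiF_top]
    obtain ⟨i₀, hi₀⟩ := exists_max (by omega : 1 ≤ n) P
    rw [fin_ciSup_eq P i₀ hi₀]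
    have := Real.log_neg (hP i₀) (hlt i₀)
    linarith
  · by_cases h1 : α = 1
    · subst h1
      rw [renyiF_one]
      have : 0 < ∑ i, -(P i * Real.log (P i)) := by
        apply Finset.sum_pos _ Finset.univ_nonempty
        intro i _
        have := Real.log_neg (hP i) (hlt i)
        nlinarith [hP i]
      rw [Finset.sum_neg_distrib] at this
      linarith
    · rw [renyiF_ne _ htop h1]
      have ha0 : 0 < α.toReal := ENNReal.toReal_pos hα.ne' htop
      have ha1 : α.toReal ≠ 1 := by
        simpa using (ENNReal.toReal_eq_one_iff α).not.mpr h1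
      rcases lt_or_gt_of_ne ha1 with h | h
      · -- a < 1 : ∑ P^a > 1
        have hgt : 1 < ∑ i, P i ^ α.toReal := by
          calc (1:ℝ) = ∑ i, P i := hsum.symm
          _ < ∑ i, P i ^ α.toReal := by
              apply Finset.sum_lt_sum_of_nonempty Finset.univ_nonempty
              intro i _
              have := Real.rpow_lt_rpow_of_exponent_gt (hP i) (hlt i) h
              rwa [Real.rpow_one] at this
        have hlog : 0 < Real.log (∑ i, P i ^ α.toReal) := Real.log_pos hgt
        have hc : 0 < 1/(1 - α.toReal) := by
          apply div_pos one_pos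
          linarith
        positivity
      · -- a > 1 : ∑ P^a < 1
        have hstep : ∑ i, P i ^ α.toReal < ∑ i, P i := by
          apply Finset.sum_lt_sum_of_nonempty Finset.univ_nonempty
          intro i _
          have := Real.rpow_lt_rpow_of_exponent_gt (hP i) (hlt i) h
          rwa [Real.rpow_one] at this
        have hltk : ∑ i, P i ^ α.toReal < 1 := by rw [hsum] at hstep; exact hstep
        have hsumpos : 0 < ∑ i, P i ^ α.toReal := sum_rpow_pos (by omega) hP _
        have hlog : Real.log (∑ i, P i ^ α.toReal) < 0 := Real.log_neg hsumpos hltk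
        have hc : 1/(1 - α.toReal) < 0 := by
          apply div_neg_of_pos_of_neg one_pos
          linarith
        nlinarith

lemma q_le_p {n : ℕ} (hn2 : 2 ≤ n) {P : Fin n → ℝ} (hP : ∀ i, 0 < P i)
    (hsum : ∑ i, P i = 1) {p : ℝ} (hpn : 1/(n:ℝ) ≤ p) (hplt : p < 1)
    {α : ℝ≥0∞} (hα : 0 < α) (hinv : renyiF (vDist n p) α = renyiF P α)
    (i₀ : Fin n) (hmax : ∀ j, P j ≤ P i₀) : P i₀ ≤ p := by
  have hn1 : (0:ℝ) < (n:ℝ) - 1 := by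
    have : (2:ℝ) ≤ (n:ℝ) := by exact_mod_cast hn2
    linarith
  have hn0 : (0:ℝ) < (n:ℝ) := by positivity
  set q := P i₀ with hqdef
  have hq1 : q < 1 := P_lt_one hn2 hP hsum i₀
  have hq0 : 0 < q := hP i₀
  have hqn : 1/(n:ℝ) ≤ q := by
    have h := Finset.sum_le_card_nsmul Finset.univ P q (fun j _ => hmax j)
    rw [hsum, Finset.card_univ, Fintype.card_fin, nsmul_eq_mul] at h
    rw [div_le_iff₀ hn0]
    linarith
  have hp0 : 0 < p := lt_of_lt_of_le (by positivity) hpn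
  have hr0 : 0 < (1 - p)/((n:ℝ)-1) := div_pos (by linarith) hn1
  have hrp : (1 - p)/((n:ℝ)-1) ≤ p := by
    rw [div_le_iff₀ hn1]
    rw [div_le_iff₀ hn0] at hpn
    nlinarith
  have hpmem : p ∈ Set.Ico (1/(n:ℝ)) 1 := ⟨hpn, hplt⟩
  have hqmem : q ∈ Set.Ico (1/(n:ℝ)) 1 := ⟨hqn, hq1⟩
  by_contra hcon
  push_neg at hcon  -- p < q
  by_cases htop : α = ⊤
  · subst htop
    rw [renyiF_top, renyiF_top, vDist_sup (by omega) hrp, fin_ciSup_eq P i₀ hmax] at hinv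
    have : p = q := by
      have := neg_injective hinv
      have h2 := Real.exp_log hp0
      rw [this, Real.exp_log hq0] at h2
      exact h2.symm
    linarith
  · by_cases h1 : α = 1
    · subst h1
      rw [renyiF_one, renyiF_one] at hinv
      have hvS : -∑ i, vDist n p i * Real.log (vDist n p i) = fS n p := by
        rw [sum_vDist_comp' (by omega : 1 ≤ n) p (fun x => x * Real.log x)]
        unfold fS Real.negMulLog
        ring
      have hPS : -∑ i, P i * Real.log (P i) ≤ fS n q := by
        have hJ := jensen_shannon (i₀ := i₀) hn2 hP hsum
        have hsplit := Finset.add_sum_erase Finset.univ (fun i => Real.negMulLog (P i))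
          (Finset.mem_univ i₀)
        have hneg : -∑ i, P i * Real.log (P i) = ∑ i, Real.negMulLog (P i) := by
          unfold Real.negMulLog
          rw [← Finset.sum_neg_distrib]
          congr 1
          funext i
          ring
        rw [hneg, ← hsplit]
        unfold fS
        have : Real.negMulLog q = Real.negMulLog (P i₀) := by rw [hqdef]
        linarith [hJ]
      rw [hvS] at hinv
      have hlt := fS_strictAntiOn hn2 hpmem hqmem hcon
      linarith
    · have ha0 : 0 < α.toReal := ENNReal.toReal_pos hα.ne' htop
      have ha1 : α.toReal ≠ 1 := by
        simpa using (ENNReal.toReal_eq_one_iff α).not.mpr h1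
      rw [renyiF_ne _ htop h1, renyiF_ne _ htop h1] at hinv
      have hc : (1:ℝ)/(1 - α.toReal) ≠ 0 := by
        apply div_ne_zero one_ne_zero
        intro hcc
        apply ha1
        linarith
      have hlogeq := mul_left_cancel₀ hc hinv
      have hvpos : ∀ i, 0 < vDist n p i := vDist_pos hp0 hr0
      have hsums : ∑ i, vDist n p i ^ α.toReal = ∑ i, P i ^ α.toReal :=
        Real.log_injOn_pos (Set.mem_Ioi.mpr (sum_rpow_pos (by omega) hvpos _))
          (Set.mem_Ioi.mpr (sum_rpow_pos (by omega) hP _)) hlogeq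
      have hvA : ∑ i, vDist n p i ^ α.toReal = fA n α.toReal p :=
        sum_vDist_comp' (by omega : 1 ≤ n) p (fun x => x ^ α.toReal)
      have hsplit := Finset.add_sum_erase Finset.univ (fun i => P i ^ α.toReal)
        (Finset.mem_univ i₀)
      rcases lt_or_gt_of_ne ha1 with h | h
      · -- a < 1 : fA antitone, ∑ P^a ≤ fA q
        have hJ := jensen_lt_one (i₀ := i₀) hn2 hP hsum ha0 h
        have hPA : ∑ i, P i ^ α.toReal ≤ fA n α.toReal q := by
          rw [← hsplit]
          unfold fA
          linarith [hJ]
        have hlt := fA_strictAntiOn hn2 ha0 h hpmem hqmem hcon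
        rw [hvA] at hsums
        linarith
      · -- a > 1 : fA monotone, ∑ P^a ≥ fA q
        have hJ := jensen_gt_one (i₀ := i₀) hn2 hP hsum h.le
        have hPA : fA n α.toReal q ≤ ∑ i, P i ^ α.toReal := by
          rw [← hsplit]
          unfold fA
          linarith [hJ]
        have hlt := fA_strictMonoOn hn2 h hpmem hqmem hcon
        rw [hvA] at hsums
        linarith


theorem stmt_15 (n : ℕ) (hn : 1 ≤ n) (P : Fin n → ℝ) (hP : ∀ i, 0 < P i)
    (hsum : ∑ i, P i = 1) (α β : ℝ≥0∞) (hα : 0 < α) (hβ : 0 < β)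
    (p : ℝ) (hp : p ∈ Set.Icc (1 / (n : ℝ)) 1)
    (hinv : renyiF (vDist n p) α = renyiF P α) :
    (α ≤ β → renyiF (vDist n p) β ≤ renyiF P β) ∧
    (β ≤ α → renyiF P β ≤ renyiF (vDist n p) β) := by
  rcases eq_or_lt_of_le hn with hn1 | hn2
  · -- n = 1
    obtain rfl : n = 1 := hn1.symm
    have hp1 : p = 1 := le_antisymm hp.2 (by simpa using hp.1)
    have hPeq : vDist 1 p = P := by
      funext i
      have hi : i = 0 := Subsingleton.elim i 0
      have hP1 : P 0 = 1 := by rw [← Fin.sum_univ_one P]; exact hsum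
      rw [hi]
      simp [vDist, hp1, hP1]
    rw [hPeq]
    exact ⟨fun _ => le_refl _, fun _ => le_refl _⟩
  · have hn2' : 2 ≤ n := hn2
    haveI : NeZero n := ⟨by omega⟩
    have hn1R : (0:ℝ) < (n:ℝ) - 1 := by
      have : (2:ℝ) ≤ (n:ℝ) := by exact_mod_cast hn2'
      linarith
    have hn0 : (0:ℝ) < (n:ℝ) := by positivity
    obtain ⟨i₀, hmax⟩ := exists_max (by omega : 1 ≤ n) P
    have hq0 : 0 < P i₀ := hP i₀
    have hplt : p < 1 := by
      rcases hp.2.eq_or_lt with h | h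
      · exfalso
        rw [h] at hinv
        rw [renyiF_vDist_one hn2' hα] at hinv
        have := renyiF_pos hn2' hP hsum hα
        linarith
      · exact h
    have hp0 : 0 < p := lt_of_lt_of_le (by positivity) hp.1
    have hr0 : 0 < (1 - p)/((n:ℝ)-1) := div_pos (by linarith) hn1R
    have hrp : (1 - p)/((n:ℝ)-1) ≤ p := by
      rw [div_le_iff₀ hn1R]
      have := hp.1
      rw [div_le_iff₀ hn0] at this
      nlinarith
    have hqp : P i₀ ≤ p := q_le_p hn2' hP hsum hp.1 hplt hα hinv i₀ hmax
    have hPp : ∀ i, P i ≤ p := fun i => (hmax i).trans hqp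
    have hvpos : ∀ i, 0 < vDist n p i := vDist_pos hp0 hr0
    have hsv : ∑ i, vDist n p i = 1 := sum_vDist_self hn2' p
    have hvmem : ∀ i, vDist n p i = p ∨ vDist n p i = (1 - p)/((n:ℝ)-1) := vDist_mem n p
    have hvj : vDist n p 0 = p := by simp [vDist]
    have hvr : ∀ j : Fin n, j ≠ 0 → vDist n p j = (1 - p)/((n:ℝ)-1) := by
      intro j hj
      have : (j : ℕ) ≠ 0 := by
        intro hc
        apply hj
        apply Fin.ext
        simp [hc]
      simp [vDist, this]
    have hsupv : ⨆ i, vDist n p i = p := vDist_sup (by omega) hrp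
    have hsupP : ⨆ i, P i = P i₀ := fin_ciSup_eq P i₀ hmax
    have hpq_top : α = ⊤ → p = P i₀ := by
      intro h
      subst h
      rw [renyiF_top, renyiF_top, hsupv, hsupP] at hinv
      have h2 := neg_injective hinv
      have h3 := Real.exp_log hp0
      rw [h2, Real.exp_log hq0] at h3
      exact h3.symm
    -- facts per case of α (packaged as implications)
    have hcaseA : α = ⊤ →
        (∀ b : ℝ, 0 ≤ b → b ≤ 1 → ∑ i, P i ^ b ≤ ∑ i, vDist n p i ^ b) ∧
        (∀ b : ℝ, 1 ≤ b → ∑ i, vDist n p i ^ b ≤ ∑ i, P i ^ b) ∧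
        (∑ i, vDist n p i * Real.log (vDist n p i) ≤ ∑ i, P i * Real.log (P i)) := by
      intro h
      exact caseA (by omega) hr0 hrp hvpos hP hPp hsv hsum (hpq_top h).symm hvj hvr
    have hcaseB : α = 1 →
        ∀ b : ℝ, 0 ≤ b → ∑ i, P i ^ b ≤ ∑ i, vDist n p i ^ b := by
      intro h
      subst h
      rw [renyiF_one, renyiF_one] at hinv
      exact caseB (by omega) hr0 hrp hvmem hvpos hP hPp hsv hsum (by linarith)
    have hα_facts : α ≠ ⊤ → α ≠ 1 →
        0 < α.toReal ∧ α.toReal ≠ 1 ∧ ∑ i, vDist n p i ^ α.toReal = ∑ i, P i ^ α.toReal := by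
      intro hαtop hα1
      have ha0 : 0 < α.toReal := ENNReal.toReal_pos hα.ne' hαtop
      have ha1 : α.toReal ≠ 1 := by
        simpa using (ENNReal.toReal_eq_one_iff α).not.mpr hα1
      refine ⟨ha0, ha1, ?_⟩
      rw [renyiF_ne _ hαtop hα1, renyiF_ne _ hαtop hα1] at hinv
      have hc : (1:ℝ)/(1 - α.toReal) ≠ 0 := by
        apply div_ne_zero one_ne_zero
        intro hcc
        exact ha1 (by linarith)
      exact Real.log_injOn_pos (Set.mem_Ioi.mpr (sum_rpow_pos (by omega) hvpos _))
        (Set.mem_Ioi.mpr (sum_rpow_pos (by omega) hP _)) (mul_left_cancel₀ hc hinv)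
    have hcaseC : α ≠ ⊤ → α ≠ 1 →
        (∀ b : ℝ, 0 ≤ b → b ≤ min α.toReal 1 → ∑ i, P i ^ b ≤ ∑ i, vDist n p i ^ b) ∧
        (∀ b : ℝ, min α.toReal 1 ≤ b → b ≤ max α.toReal 1 →
          ∑ i, vDist n p i ^ b ≤ ∑ i, P i ^ b) ∧
        (∀ b : ℝ, max α.toReal 1 ≤ b → ∑ i, P i ^ b ≤ ∑ i, vDist n p i ^ b) ∧
        (α.toReal < 1 → ∑ i, P i * Real.log (P i) ≤ ∑ i, vDist n p i * Real.log (vDist n p i)) ∧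
        (1 < α.toReal → ∑ i, vDist n p i * Real.log (vDist n p i) ≤ ∑ i, P i * Real.log (P i)) := by
      intro hαtop hα1
      obtain ⟨ha0, ha1, haz⟩ := hα_facts hαtop hα1
      exact caseC (by omega) hr0 hrp hvmem hvpos hP hPp hsv hsum ha0 ha1 haz
    have hvbpos : ∀ b : ℝ, 0 < ∑ i, vDist n p i ^ b :=
      fun b => sum_rpow_pos (by omega) hvpos b
    have hPbpos : ∀ b : ℝ, 0 < ∑ i, P i ^ b :=
      fun b => sum_rpow_pos (by omega) hP b
    constructor
    · -- α ≤ β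
      intro hab
      by_cases hβtop : β = ⊤
      · subst hβtop
        rw [renyiF_top, renyiF_top, hsupv, hsupP]
        exact neg_le_neg (Real.log_le_log hq0 hqp)
      · have hαtop : α ≠ ⊤ := by
          intro h
          exact hβtop (top_le_iff.mp (h ▸ hab))
        by_cases hβ1 : β = 1
        · subst hβ1
          rw [renyiF_one, renyiF_one]
          apply neg_le_neg
          by_cases hα1 : α = 1
          · subst hα1
            rw [renyiF_one, renyiF_one] at hinv
            linarith
          · have halt : α.toReal < 1 := by
              have h1le : α < 1 := lt_of_le_of_ne hab hα1
              have := (ENNReal.toReal_lt_toReal hαtop (by simp : (1:ℝ≥0∞) ≠ ⊤)).mpr h1le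
              simpa using this
            exact (hcaseC hαtop hα1).2.2.2.1 halt
        · have hb0 : 0 < β.toReal := ENNReal.toReal_pos hβ.ne' hβtop
          have hb1 : β.toReal ≠ 1 := by
            simpa using (ENNReal.toReal_eq_one_iff β).not.mpr hβ1
          rw [renyiF_ne _ hβtop hβ1, renyiF_ne _ hβtop hβ1]
          rcases lt_or_gt_of_ne hb1 with hblt | hbgt
          · -- b < 1, need ∑ v^b ≤ ∑ P^b
            have hkey : ∑ i, vDist n p i ^ β.toReal ≤ ∑ i, P i ^ β.toReal := by
              by_cases hα1 : α = 1
              · exfalso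
                have h1le : (1:ℝ≥0∞) < β := lt_of_le_of_ne (hα1 ▸ hab) (Ne.symm hβ1)
                have := (ENNReal.toReal_lt_toReal (by simp : (1:ℝ≥0∞) ≠ ⊤) hβtop).mpr h1le
                simp at this
                linarith
              · have hab' : α.toReal ≤ β.toReal :=
                  (ENNReal.toReal_le_toReal hαtop hβtop).mpr hab
                exact (hcaseC hαtop hα1).2.1 β.toReal
                  ((min_le_left _ _).trans hab') (hblt.le.trans (le_max_right _ _))
            exact helperPos (hvbpos _) hkey (by apply div_nonneg <;> linarith)
          · -- b > 1, need ∑ P^b ≤ ∑ v^b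
            have hkey : ∑ i, P i ^ β.toReal ≤ ∑ i, vDist n p i ^ β.toReal := by
              by_cases hα1 : α = 1
              · exact hcaseB hα1 β.toReal hb0.le
              · have hab' : α.toReal ≤ β.toReal :=
                  (ENNReal.toReal_le_toReal hαtop hβtop).mpr hab
                exact (hcaseC hαtop hα1).2.2.1 β.toReal (max_le hab' hbgt.le)
            exact helperNeg (hPbpos _) hkey
              (by apply div_nonpos_of_nonneg_of_nonpos <;> linarith)
    · -- β ≤ α
      intro hba
      by_cases hβtop : β = ⊤
      · subst hβtop
        have hαtop : α = ⊤ := top_le_iff.mp hba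
        rw [renyiF_top, renyiF_top, hsupv, hsupP, hpq_top hαtop]
      · by_cases hβ1 : β = 1
        · subst hβ1
          rw [renyiF_one, renyiF_one]
          apply neg_le_neg
          by_cases hαtop : α = ⊤
          · exact (hcaseA hαtop).2.2
          · by_cases hα1 : α = 1
            · subst hα1
              rw [renyiF_one, renyiF_one] at hinv
              linarith
            · have hagt : 1 < α.toReal := by
                have h1le : (1:ℝ≥0∞) < α := lt_of_le_of_ne hba (Ne.symm hα1)
                have := (ENNReal.toReal_lt_toReal (by simp : (1:ℝ≥0∞) ≠ ⊤) hαtop).mpr h1le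
                simpa using this
              exact (hcaseC hαtop hα1).2.2.2.2 hagt
        · have hb0 : 0 < β.toReal := ENNReal.toReal_pos hβ.ne' hβtop
          have hb1 : β.toReal ≠ 1 := by
            simpa using (ENNReal.toReal_eq_one_iff β).not.mpr hβ1
          rw [renyiF_ne _ hβtop hβ1, renyiF_ne _ hβtop hβ1]
          rcases lt_or_gt_of_ne hb1 with hblt | hbgt
          · -- b < 1, need ∑ P^b ≤ ∑ v^b
            have hkey : ∑ i, P i ^ β.toReal ≤ ∑ i, vDist n p i ^ β.toReal := by
              by_cases hαtop : α = ⊤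
              · exact (hcaseA hαtop).1 β.toReal hb0.le hblt.le
              · by_cases hα1 : α = 1
                · exact hcaseB hα1 β.toReal hb0.le
                · have hba' : β.toReal ≤ α.toReal :=
                    (ENNReal.toReal_le_toReal hβtop hαtop).mpr hba
                  exact (hcaseC hαtop hα1).1 β.toReal hb0.le (le_min hba' hblt.le)
            exact helperPos (hPbpos _) hkey (by apply div_nonneg <;> linarith)
          · -- b > 1, need ∑ v^b ≤ ∑ P^b
            have hkey : ∑ i, vDist n p i ^ β.toReal ≤ ∑ i, P i ^ β.toReal := by
              by_cases hαtop : α = ⊤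
              · exact (hcaseA hαtop).2.1 β.toReal hbgt.le
              · by_cases hα1 : α = 1
                · exfalso
                  have h1le : β ≤ 1 := hα1 ▸ hba
                  have := (ENNReal.toReal_le_toReal hβtop (by simp : (1:ℝ≥0∞) ≠ ⊤)).mpr h1le
                  simp at this
                  linarith
                · have hba' : β.toReal ≤ α.toReal :=
                    (ENNReal.toReal_le_toReal hβtop hαtop).mpr hba
                  have hagt : 1 < α.toReal := lt_of_lt_of_le hbgt hba'
                  exact (hcaseC hαtop hα1).2.1 β.toReal
                    ((min_le_right _ _).trans hbgt.le) (hba'.trans (le_max_left _ _))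
            exact helperNeg (hvbpos _) hkey
              (by apply div_nonpos_of_nonneg_of_nonpos <;> linarith)
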